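/- Let x_1,…,x_N : [−τ̄,∞) → ℝ^d be C¹ solutions of the delayed Hegselmann–Krause system with communication rates satisfying ψ₀ ≤ a_{ij}(t) ≤ 1/ψ₀ for a constant ψ₀ ∈ (0,1], delay τ ∈ W^{1,∞} with 0 ≤ τ(t) ≤ τ̄ and τ'(t) ≤ c < 1, and coupling λ > 0. If τ̄ < ln(1 + ψ₀³(1−c)/((2+ψ₀²)λ)), then there exist constants γ, C > 0, independent of N, such that the diameter d_X(t) = max_{i,j}|x_i(t) − x_j(t)| satisfies d_X(t) ≤ C e^{−γt} for all t ≥ 0. -/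

import Mathlib

set_option maxHeartbeats 1000000

open Set Filter
open scoped RealInnerProductSpace

/-- First-crossing comparison lemma: finitely many continuous functions stay below a
smooth barrier if they start strictly below it and, whenever one of them touches the
barrier (with full history below the barrier), it is differentiable there with
derivative strictly less than the barrier's. -/
lemma HK_crossing {ι : Type*} [Fintype ι] [Nonempty ι] (f : ι → ℝ → ℝ) (B B' : ℝ → ℝ)
    (t₀ : ℝ)
    (hf : ∀ i, ContinuousOn (f i) (Set.Ici t₀))
    (hB : ∀ t, HasDerivAt B (B' t) t)
    (init : ∀ i, f i t₀ < B t₀)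
    (key : ∀ t, t₀ < t → (∀ i s, t₀ ≤ s → s ≤ t → f i s ≤ B s) → ∀ i, f i t = B t →
      ∃ v, HasDerivAt (f i) v t ∧ v < B' t) :
    ∀ t, t₀ ≤ t → ∀ i, f i t ≤ B t := by
  by_contra hcon
  push_neg at hcon
  obtain ⟨T, hT, i₀, hi₀⟩ := hcon
  classical
  set S : Set ℝ := {u | t₀ ≤ u ∧ ∃ i, B u < f i u} with hS
  have hSne : S.Nonempty := ⟨T, hT, i₀, hi₀⟩
  have hSbd : BddBelow S := ⟨t₀, fun u hu => hu.1⟩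
  set c := sInf S with hc
  have hc0 : t₀ ≤ c := le_csInf hSne (fun u hu => hu.1)
  have hlow : ∀ s, t₀ ≤ s → s < c → ∀ i, f i s ≤ B s := by
    intro s hs hsc i
    by_contra hc'
    push_neg at hc'
    exact absurd (csInf_le hSbd ⟨hs, i, hc'⟩) (not_le.2 hsc)
  have hBc : Continuous B := by
    rw [continuous_iff_continuousAt]; exact fun t => (hB t).continuousAt
  -- all functions are ≤ B at c
  have hcle : ∀ i, f i c ≤ B c := by
    intro i
    rcases eq_or_lt_of_le hc0 with he | hlt
    · rw [← he]; exact (init i).le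
    · refine le_of_forall_pos_le_add ?_
      intro η hη
      have hfc : ContinuousWithinAt (f i) (Ici t₀) c := hf i c (le_of_lt hlt)
      rw [Metric.continuousWithinAt_iff] at hfc
      obtain ⟨δ₁, hδ₁, hm₁⟩ := hfc (η / 2) (by linarith)
      have hBcc : ContinuousAt B c := hBc.continuousAt
      rw [Metric.continuousAt_iff] at hBcc
      obtain ⟨δ₂, hδ₂, hm₂⟩ := hBcc (η / 2) (by linarith)
      set s : ℝ := max t₀ (c - min δ₁ δ₂ / 2) with hsdef
      have hst₀ : t₀ ≤ s := le_max_left _ _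
      have hmin : 0 < min δ₁ δ₂ := lt_min hδ₁ hδ₂
      have hsc : s < c := by
        apply max_lt hlt; linarith
      have hdist : dist s c < min δ₁ δ₂ := by
        rw [Real.dist_eq, abs_of_nonpos (by linarith)]
        have : c - min δ₁ δ₂ / 2 ≤ s := le_max_right _ _
        linarith
      have h1 : dist (f i s) (f i c) < η / 2 :=
        hm₁ hst₀ (lt_of_lt_of_le hdist (min_le_left _ _))
      have h2 : dist (B s) (B c) < η / 2 :=
        hm₂ (lt_of_lt_of_le hdist (min_le_right _ _))
      have h3 : f i s ≤ B s := hlow s hst₀ hsc i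
      rw [Real.dist_eq] at h1 h2
      have := abs_lt.1 h1
      have := abs_lt.1 h2
      linarith [(abs_lt.1 h1).1, (abs_lt.1 h1).2, (abs_lt.1 h2).1, (abs_lt.1 h2).2]
  have hcnotS : c ∉ S := fun hcS => absurd (hcle hcS.2.choose) (not_le.2 hcS.2.choose_spec)
  -- approach sequence from the right
  have happrox : ∀ n : ℕ, ∃ u, u ∈ S ∧ u < c + 1 / (n + 1) := by
    intro n
    have : c < c + 1 / ((n : ℝ) + 1) := by
      have : (0:ℝ) < 1 / ((n:ℝ) + 1) := by positivity
      linarith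
    exact exists_lt_of_csInf_lt hSne this
  choose u huS hulr using happrox
  have huc : ∀ n, c < u n := by
    intro n
    rcases lt_or_eq_of_le (csInf_le hSbd (huS n)) with h | h
    · exact h
    · exfalso; apply hcnotS; rw [show c = u n from h]; exact huS n
  choose jj hjj using fun n => (huS n).2
  -- pigeonhole: some index occurs infinitely often
  obtain ⟨i, hi_inf⟩ := Finite.exists_infinite_fiber jj
  rw [Set.infinite_coe_iff] at hi_inf
  have hfib : ∀ m : ℕ, ∃ n ∈ jj ⁻¹' {i}, m < n := fun m => hi_inf.exists_gt m
  -- distance control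
  have hudist : ∀ n : ℕ, dist (u n) c < 1 / ((n:ℝ) + 1) := by
    intro n
    rw [Real.dist_eq, abs_of_pos (by linarith [huc n])]
    linarith [hulr n]
  have hsmall : ∀ δ : ℝ, 0 < δ → ∀ m : ℕ, ∃ n, m < n ∧ jj n = i ∧ dist (u n) c < δ ∧ c < u n := by
    intro δ hδ m
    obtain ⟨m', hm'δ⟩ := exists_nat_gt (1 / δ)
    obtain ⟨n, hn1, hn2⟩ := hfib (max m m')
    refine ⟨n, lt_of_le_of_lt (le_max_left _ _) hn2, hn1, ?_, huc n⟩
    have h1 : (1:ℝ) / δ < m' := hm'δ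
    have h2 : (m' : ℝ) < (n:ℝ) + 1 := by
      have : m' ≤ n := le_of_lt (lt_of_le_of_lt (le_max_right _ _) hn2)
      exact_mod_cast Nat.lt_succ_of_le this
    have hpos : (0:ℝ) < (n:ℝ) + 1 := by positivity
    have : 1 / ((n:ℝ)+1) < δ := by
      rw [div_lt_iff₀ hpos]
      rw [div_lt_iff₀ hδ] at h1
      nlinarith
    exact lt_trans (hudist n) this
  -- f i touches B at c
  have htouch : f i c = B c := by
    refine le_antisymm (hcle i) (le_of_forall_pos_le_add ?_)
    intro η hη
    have hfc : ContinuousWithinAt (f i) (Ici t₀) c := hf i c hc0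
    rw [Metric.continuousWithinAt_iff] at hfc
    obtain ⟨δ₁, hδ₁, hm₁⟩ := hfc (η / 2) (by linarith)
    have hBcc : ContinuousAt B c := hBc.continuousAt
    rw [Metric.continuousAt_iff] at hBcc
    obtain ⟨δ₂, hδ₂, hm₂⟩ := hBcc (η / 2) (by linarith)
    obtain ⟨n, _, hni, hnd, hnc⟩ := hsmall (min δ₁ δ₂) (lt_min hδ₁ hδ₂) 0
    have h1 : dist (f i (u n)) (f i c) < η / 2 :=
      hm₁ (le_trans hc0 (le_of_lt hnc)) (lt_of_lt_of_le hnd (min_le_left _ _))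
    have h2 : dist (B (u n)) (B c) < η / 2 :=
      hm₂ (lt_of_lt_of_le hnd (min_le_right _ _))
    have h3 : B (u n) < f (jj n) (u n) := hjj n
    rw [hni] at h3
    rw [Real.dist_eq] at h1 h2
    linarith [(abs_lt.1 h1).1, (abs_lt.1 h1).2, (abs_lt.1 h2).1, (abs_lt.1 h2).2]
  -- c is strictly past t₀
  have ht₀c : t₀ < c := by
    rcases eq_or_lt_of_le hc0 with he | h
    · exfalso; rw [← he] at htouch; exact absurd htouch (ne_of_lt (init i))
    · exact h
  -- history hypothesis
  have hist : ∀ j s, t₀ ≤ s → s ≤ c → f j s ≤ B s := by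
    intro j s hs hsc
    rcases lt_or_eq_of_le hsc with h | h
    · exact hlow s hs h j
    · rw [h]; exact hcle j
  obtain ⟨v, hv, hvB⟩ := key c ht₀c hist i htouch
  -- strict decrease after the touching point
  have hg : HasDerivAt (fun z => f i z - B z) (v - B' c) c := hv.sub (hB c)
  rw [hasDerivAt_iff_tendsto_slope] at hg
  have hneg : ∀ᶠ z in nhdsWithin c {c}ᶜ, slope (fun z => f i z - B z) c z < 0 :=
    hg.eventually (gt_mem_nhds (by linarith))
  rw [eventually_nhdsWithin_iff, Metric.eventually_nhds_iff] at hneg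
  obtain ⟨ε, hε, hev⟩ := hneg
  obtain ⟨n, _, hni, hnd, hnc⟩ := hsmall ε hε 0
  have hslope := hev hnd (by exact fun h => absurd h (ne_of_gt hnc))
  rw [slope_def_field] at hslope
  have hBn : B (u n) < f i (u n) := by have := hjj n; rwa [hni] at this
  have hpos : 0 < u n - c := by linarith
  rw [div_neg_iff] at hslope
  rcases hslope with ⟨h1, h2⟩ | ⟨h1, h2⟩
  · linarith
  · rw [htouch] at h1; linarith


private lemma le_of_mul_self_le_mul_self' {u v : ℝ} (hv : 0 ≤ v) (h : u * u ≤ v * v) :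
    u ≤ v := by nlinarith

open Finset in
theorem HK_exponential_consensus {d N : ℕ} (hN : 0 < N)
    (x x' : Fin N → ℝ → EuclideanSpace ℝ (Fin d))
    (a : Fin N → Fin N → ℝ → ℝ) (τ τ' : ℝ → ℝ) (τbar lam ψ₀ c : ℝ)
    (hlam : 0 < lam) (hψ₀ : 0 < ψ₀) (hψ₀le : ψ₀ ≤ 1)
    (hc0 : 0 < c) (hc1 : c < 1)
    (hτ : ∀ t, 0 ≤ τ t ∧ τ t ≤ τbar)
    (hτderiv : ∀ t, 0 < t → HasDerivAt τ (τ' t) t)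
    (hτ' : ∀ t, 0 < t → τ' t ≤ c)
    (ha : ∀ i j t, 0 ≤ t → ψ₀ ≤ a i j t ∧ a i j t ≤ 1 / ψ₀)
    (hcont : ∀ i, ContinuousOn (x i) (Set.Ici (-τbar)))
    (hderiv : ∀ i t, 0 < t → HasDerivAt (x i) (x' i t) t)
    (hODE : ∀ i t, 0 < t →
      x' i t = (lam / (N : ℝ)) •
        ∑ j ∈ Finset.univ.erase i, a i j t • (x j (t - τ t) - x i t))
    (dX : ℝ → ℝ)
    (hdX : ∀ t, (∀ i j, ‖x i t - x j t‖ ≤ dX t) ∧ ∃ i j, dX t = ‖x i t - x j t‖)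
    (hτbar : τbar < Real.log (1 + ψ₀ ^ 3 * (1 - c) / ((2 + ψ₀ ^ 2) * lam))) :
    ∃ γ C : ℝ, 0 < γ ∧ 0 < C ∧ ∀ t, 0 ≤ t → dX t ≤ C * Real.exp (-γ * t) := by
  classical
  have hNR : (0:ℝ) < N := by exact_mod_cast hN
  haveI : Nonempty (Fin N) := ⟨⟨0, hN⟩⟩
  have hτbar0 : 0 ≤ τbar := le_trans (hτ 0).1 (hτ 0).2
  -- ## arithmetic consequences of the smallness assumption
  have hτx : τbar * ((2 + ψ₀ ^ 2) * lam) < ψ₀ ^ 3 := by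
    have hden : (0:ℝ) < (2 + ψ₀ ^ 2) * lam := by positivity
    have hx₀ : ψ₀ ^ 3 * (1 - c) / ((2 + ψ₀ ^ 2) * lam) > 0 := by
      apply div_pos (by nlinarith [pow_pos hψ₀ 3]) hden
    have h1 : Real.log (1 + ψ₀ ^ 3 * (1 - c) / ((2 + ψ₀ ^ 2) * lam))
        ≤ ψ₀ ^ 3 * (1 - c) / ((2 + ψ₀ ^ 2) * lam) := by
      have := Real.log_le_sub_one_of_pos (show (0:ℝ) < 1 + ψ₀ ^ 3 * (1 - c) / ((2 + ψ₀ ^ 2) * lam) by linarith)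
      linarith
    have h2 : τbar < ψ₀ ^ 3 * (1 - c) / ((2 + ψ₀ ^ 2) * lam) := lt_of_lt_of_le hτbar h1
    rw [lt_div_iff₀ hden] at h2
    nlinarith [pow_pos hψ₀ 3]
  -- ## constants
  obtain ⟨A, hA_def⟩ : ∃ z : ℝ, z = lam * ψ₀ := ⟨_, rfl⟩
  obtain ⟨β, hβ_def⟩ : ∃ z : ℝ, z = lam / ψ₀ := ⟨_, rfl⟩
  obtain ⟨θ, hθ_def⟩ : ∃ z : ℝ, z = lam * τbar / ψ₀ := ⟨_, rfl⟩
  obtain ⟨α, hα_def⟩ : ∃ z : ℝ, z = 2 * τbar / ψ₀ ^ 2 := ⟨_, rfl⟩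
  have hA : 0 < A := by rw [hA_def]; positivity
  have hβ : 0 < β := by rw [hβ_def]; positivity
  have hθ0 : 0 ≤ θ := by rw [hθ_def]; positivity
  have hα0 : 0 ≤ α := by rw [hα_def]; positivity
  have hαβθ : α * β + θ < 1 := by
    rw [hα_def, hβ_def, hθ_def]
    rw [div_mul_div_comm, div_add_div _ _ (by positivity) (by positivity),
      div_lt_one (by positivity)]
    nlinarith [pow_pos hψ₀ 3, pow_pos hψ₀ 2, sq_nonneg ψ₀]
  have hθ1 : θ < 1 := by nlinarith
  have h1θ : 0 < 1 - θ := by linarith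
  have hcore : α / (1 - θ) < 1 / β := by
    rw [div_lt_div_iff₀ h1θ hβ]
    nlinarith
  obtain ⟨ν, hν_def⟩ : ∃ z : ℝ, z = (α / (1 - θ) + 1 / β) / 2 := ⟨_, rfl⟩
  have hν1 : α / (1 - θ) < ν := by rw [hν_def]; linarith
  have hν2 : ν < 1 / β := by rw [hν_def]; linarith
  have hνα : α < ν := by
    have : α ≤ α / (1 - θ) := by
      rw [le_div_iff₀ h1θ]; nlinarith
    linarith
  have hν0 : 0 ≤ ν := le_trans hα0 hνα.le
  obtain ⟨μ, hμ_def⟩ : ∃ z : ℝ, z = ν - α := ⟨_, rfl⟩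
  have hμ : 0 < μ := by rw [hμ_def]; linarith
  have hβν : β * ν < 1 := by
    rw [← lt_div_iff₀' hβ]; exact hν2
  obtain ⟨ε, hε_def⟩ : ∃ z : ℝ, z = (1 - β * ν) / 2 := ⟨_, rfl⟩
  have hε : 0 < ε := by rw [hε_def]; linarith
  have hε1 : ε < 1 := by
    have : 0 ≤ β * ν := by positivity
    rw [hε_def]; linarith
  obtain ⟨s₀, hs₀_def⟩ : ∃ z : ℝ, z = Real.log (1 / ε) / A := ⟨_, rfl⟩
  have hs₀ : 0 < s₀ := by
    rw [hs₀_def]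
    apply div_pos _ hA
    apply Real.log_pos
    rw [lt_div_iff₀ hε]; linarith
  have hexp : Real.exp (-A * s₀) = ε := by
    rw [hs₀_def]
    rw [show -A * (Real.log (1 / ε) / A) = -Real.log (1 / ε) by field_simp]
    rw [one_div, Real.log_inv, neg_neg, Real.exp_log hε]
  obtain ⟨κ₁, hκ₁_def⟩ : ∃ z : ℝ, z = ε + ν * β := ⟨_, rfl⟩
  have hκ₁pos : 0 < κ₁ := by rw [hκ₁_def]; positivity
  have hκ₁ : κ₁ < 1 := by rw [hκ₁_def]; rw [hε_def]; linarith [mul_comm ν β]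
  obtain ⟨κ₂, hκ₂_def⟩ : ∃ z : ℝ, z = θ * ν / μ := ⟨_, rfl⟩
  have hκ₂0 : 0 ≤ κ₂ := by rw [hκ₂_def]; positivity
  have hκ₂ : κ₂ < 1 := by
    have h5 : α < ν * (1 - θ) := (div_lt_iff₀ h1θ).1 hν1
    have h6 : θ * ν < μ := by
      rw [hμ_def]
      rw [mul_one_sub] at h5
      have := mul_comm ν θ
      linarith
    rw [hκ₂_def]
    exact (div_lt_one hμ).2 h6
  obtain ⟨κ, hκ_def⟩ : ∃ z : ℝ, z = max κ₁ κ₂ := ⟨_, rfl⟩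
  have hκpos : 0 < κ := by rw [hκ_def]; exact lt_of_lt_of_le hκ₁pos (le_max_left _ _)
  have hκ1 : κ < 1 := by rw [hκ_def]; exact max_lt hκ₁ hκ₂
  obtain ⟨L, hL_def⟩ : ∃ z : ℝ, z = 2 * τbar + s₀ := ⟨_, rfl⟩
  have hL : 0 < L := by rw [hL_def]; linarith
  obtain ⟨T₀, hT₀_def⟩ : ∃ z : ℝ, z = 2 * τbar + 1 := ⟨_, rfl⟩
  have hT₀pos : (0:ℝ) < T₀ := by rw [hT₀_def]; linarith
  -- ## initial bound
  obtain ⟨M₀, hM₀0, hM₀⟩ : ∃ M₀ : ℝ, 0 ≤ M₀ ∧ ∀ i, ∀ s ∈ Icc (-τbar) 0, ‖x i s‖ ≤ M₀ := by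
    have hsub : Icc (-τbar) (0:ℝ) ⊆ Ici (-τbar) := Icc_subset_Ici_self
    choose Cb hCb using fun i : Fin N =>
      isCompact_Icc.exists_bound_of_continuousOn ((hcont i).mono hsub)
    refine ⟨max 0 (Finset.univ.sup' Finset.univ_nonempty Cb), le_max_left _ _, ?_⟩
    intro i s hs
    exact le_trans (hCb i s hs)
      (le_trans (Finset.le_sup' Cb (Finset.mem_univ i)) (le_max_right _ _))
  -- ## invariance: uniform bound for all times
  have hinv0 : ∀ (ε' : ℝ), 0 < ε' → ∀ t, 0 ≤ t → ∀ i : Fin N,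
      (inner ℝ (x i t) (x i t) : ℝ) ≤ M₀ * M₀ + ε' * Real.exp t := by
    intro ε' hε'
    apply HK_crossing (fun i u => (inner ℝ (x i u) (x i u) : ℝ)) (fun u => M₀ * M₀ + ε' * Real.exp u)
      (fun u => ε' * Real.exp u) 0
    · intro i
      have hc : ContinuousOn (x i) (Ici (0:ℝ)) :=
        (hcont i).mono (Ici_subset_Ici.2 (by linarith))
      exact hc.inner hc
    · intro u
      exact ((Real.hasDerivAt_exp u).const_mul ε').const_add (M₀ * M₀)
    · intro i
      have h0m : ‖x i 0‖ ≤ M₀ := hM₀ i 0 ⟨by linarith, le_refl 0⟩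
      have h0e : (inner ℝ (x i 0) (x i 0) : ℝ) = ‖x i 0‖ * ‖x i 0‖ := real_inner_self_eq_norm_mul_norm _
      have h0s : ‖x i 0‖ * ‖x i 0‖ ≤ M₀ * M₀ := mul_self_le_mul_self (norm_nonneg _) h0m
      have h0p : 0 < ε' * Real.exp 0 := mul_pos hε' (Real.exp_pos 0)
      linarith
    · intro t ht hist i htouch
      refine ⟨(inner ℝ (x i t) (x' i t) : ℝ) + (inner ℝ (x' i t) (x i t) : ℝ),
        (hderiv i t ht).inner ℝ (hderiv i t ht), ?_⟩
      have hR : ‖x i t‖ * ‖x i t‖ = M₀ * M₀ + ε' * Real.exp t := by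
        rw [← real_inner_self_eq_norm_mul_norm]; exact htouch
      have hRnn : 0 ≤ ‖x i t‖ := norm_nonneg _
      have hterm : ∀ j : Fin N, (inner ℝ (x j (t - τ t) - x i t) (x i t) : ℝ) ≤ 0 := by
        intro j
        have hnj : ‖x j (t - τ t)‖ ≤ ‖x i t‖ := by
          rcases le_or_gt 0 (t - τ t) with hs | hs
          · have h1 := hist j (t - τ t) hs (by linarith only [(hτ t).1])
            have h2 : ‖x j (t - τ t)‖ * ‖x j (t - τ t)‖ ≤ M₀ * M₀ + ε' * Real.exp (t - τ t) := by
              rw [← real_inner_self_eq_norm_mul_norm]; exact h1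
            have h3 : Real.exp (t - τ t) ≤ Real.exp t :=
              Real.exp_le_exp.2 (by linarith only [(hτ t).1])
            apply le_of_mul_self_le_mul_self' hRnn
            have h6 : ε' * Real.exp (t - τ t) ≤ ε' * Real.exp t :=
              mul_le_mul_of_nonneg_left h3 hε'.le
            linarith only [h2, h6, hR]
          · have h1 : ‖x j (t - τ t)‖ ≤ M₀ := by
              apply hM₀ j (t - τ t) ⟨by linarith only [(hτ t).2, ht], hs.le⟩
            have h7 : M₀ ≤ ‖x i t‖ := by
              apply le_of_mul_self_le_mul_self' hRnn
              have h9 := mul_pos hε' (Real.exp_pos t)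
              linarith only [h9, hR]
            linarith only [h1, h7]
        have h4 : (inner ℝ (x j (t - τ t)) (x i t) : ℝ) ≤ ‖x j (t - τ t)‖ * ‖x i t‖ := real_inner_le_norm _ _
        rw [inner_sub_left]
        have h5 : (inner ℝ (x i t) (x i t) : ℝ) = ‖x i t‖ * ‖x i t‖ := real_inner_self_eq_norm_mul_norm _
        rw [h5]
        have h8 : ‖x j (t - τ t)‖ * ‖x i t‖ ≤ ‖x i t‖ * ‖x i t‖ :=
          mul_le_mul_of_nonneg_right hnj hRnn
        linarith only [h4, h8]
      have hv : (inner ℝ (x' i t) (x i t) : ℝ) ≤ 0 := by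
        rw [hODE i t ht, real_inner_smul_left, sum_inner]
        apply mul_nonpos_of_nonneg_of_nonpos (by positivity)
        apply Finset.sum_nonpos
        intro j hj
        rw [real_inner_smul_left]
        have haj0 : 0 ≤ a i j t := le_trans hψ₀.le (ha i j t ht.le).1
        exact mul_nonpos_of_nonneg_of_nonpos haj0 (hterm j)
      have hv2 : (inner ℝ (x i t) (x' i t) : ℝ) ≤ 0 := by rw [real_inner_comm]; exact hv
      have h9 := mul_pos hε' (Real.exp_pos t)
      linarith
  have hinv : ∀ (i : Fin N) t, -τbar ≤ t → ‖x i t‖ ≤ M₀ := by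
    intro i t ht
    rcases le_or_gt t 0 with h | h
    · exact hM₀ i t ⟨ht, h⟩
    · have h2 : ∀ η : ℝ, 0 < η → (inner ℝ (x i t) (x i t) : ℝ) ≤ M₀ * M₀ + η := by
        intro η hη
        have hc := hinv0 (η / Real.exp t) (by positivity) t h.le i
        have het : η / Real.exp t * Real.exp t = η := by
          field_simp
        rw [het] at hc
        exact hc
      have h3 : (inner ℝ (x i t) (x i t) : ℝ) ≤ M₀ * M₀ := le_of_forall_pos_le_add h2
      have h4 : ‖x i t‖ * ‖x i t‖ ≤ M₀ * M₀ := by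
        rw [← real_inner_self_eq_norm_mul_norm]; exact h3
      exact le_of_mul_self_le_mul_self' hM₀0 h4
  have hdiam : ∀ t, -τbar ≤ t → ∀ p q : Fin N, ‖x p t - x q t‖ ≤ 2 * M₀ := by
    intro t ht p q
    calc ‖x p t - x q t‖ ≤ ‖x p t‖ + ‖x q t‖ := norm_sub_le _ _
    _ ≤ 2 * M₀ := by linarith [hinv p t ht, hinv q t ht]
  -- ## MVT helper
  have hmvt : ∀ (k : Fin N) (t H : ℝ), 0 < t - τ t → 0 ≤ H →
      (∀ u, t - τ t ≤ u → u ≤ t → ‖x' k u‖ ≤ H) →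
      ‖x k (t - τ t) - x k t‖ ≤ τbar * H := by
    intro k t H hpos hH hsp
    have hττ : 0 ≤ τ t := (hτ t).1
    have h1 : ∀ u ∈ Icc (t - τ t) t, HasDerivWithinAt (x k) (x' k u) (Icc (t - τ t) t) u := by
      intro u hu
      exact (hderiv k u (lt_of_lt_of_le hpos hu.1)).hasDerivWithinAt
    have h2 : ∀ u ∈ Ico (t - τ t) t, ‖x' k u‖ ≤ H := fun u hu => hsp u hu.1 hu.2.le
    have h3 := norm_image_sub_le_of_norm_deriv_le_segment' h1 h2 t
      (right_mem_Icc.2 (by linarith))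
    rw [norm_sub_rev] at h3
    have h4 : H * (t - (t - τ t)) ≤ τbar * H := by
      have he : t - (t - τ t) = τ t := by ring
      rw [he]
      calc H * τ t ≤ H * τbar := mul_le_mul_of_nonneg_left (hτ t).2 hH
        _ = τbar * H := mul_comm _ _
    exact le_trans h3 h4
  -- ## speed helper
  have hspd : ∀ (i : Fin N) (t K : ℝ), 0 < t → 0 ≤ K →
      (∀ j : Fin N, j ≠ i → ‖x j (t - τ t) - x i t‖ ≤ K) → ‖x' i t‖ ≤ lam * K / ψ₀ := by
    intro i t K ht hK hbd
    rw [hODE i t ht, norm_smul]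
    have hterm : ∀ j ∈ Finset.univ.erase i, ‖a i j t • (x j (t - τ t) - x i t)‖ ≤ K / ψ₀ := by
      intro j hj
      rw [norm_smul, Real.norm_eq_abs]
      have haj := ha i j t ht.le
      have haj0 : 0 ≤ a i j t := le_trans hψ₀.le haj.1
      rw [abs_of_nonneg haj0]
      have hjne : j ≠ i := Finset.ne_of_mem_erase hj
      calc a i j t * ‖x j (t - τ t) - x i t‖ ≤ (1 / ψ₀) * K :=
            mul_le_mul haj.2 (hbd j hjne) (norm_nonneg _) (by positivity)
        _ = K / ψ₀ := by ring
    have hcard : ((Finset.univ.erase i).card : ℝ) ≤ (N : ℝ) := by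
      have := Finset.card_erase_le (s := (Finset.univ : Finset (Fin N))) (a := i)
      have h2 : (Finset.univ : Finset (Fin N)).card = N := by simp
      exact_mod_cast le_trans this (le_of_eq h2)
    have h5 : ‖∑ j ∈ Finset.univ.erase i, a i j t • (x j (t - τ t) - x i t)‖
        ≤ (N : ℝ) * (K / ψ₀) := by
      calc ‖∑ j ∈ Finset.univ.erase i, a i j t • (x j (t - τ t) - x i t)‖
          ≤ ∑ j ∈ Finset.univ.erase i, ‖a i j t • (x j (t - τ t) - x i t)‖ := norm_sum_le _ _
        _ ≤ (Finset.univ.erase i).card • (K / ψ₀) := Finset.sum_le_card_nsmul _ _ _ hterm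
        _ = ((Finset.univ.erase i).card : ℝ) * (K / ψ₀) := nsmul_eq_mul _ _
        _ ≤ (N : ℝ) * (K / ψ₀) := mul_le_mul_of_nonneg_right hcard (by positivity)
    calc ‖lam / (N : ℝ)‖ * ‖∑ j ∈ Finset.univ.erase i, a i j t • (x j (t - τ t) - x i t)‖
        ≤ (lam / N) * ((N : ℝ) * (K / ψ₀)) := by
          rw [Real.norm_eq_abs, abs_of_nonneg (by positivity)]
          exact mul_le_mul_of_nonneg_left h5 (by positivity)
      _ = lam * K / ψ₀ := by field_simp
  obtain ⟨H₀, hH₀_def⟩ : ∃ z : ℝ, z = lam * (2 * M₀) / ψ₀ := ⟨_, rfl⟩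
  have hH₀0 : 0 ≤ H₀ := by rw [hH₀_def]; positivity
  have hH₀ : ∀ t, T₀ - τbar ≤ t → ∀ i, ‖x' i t‖ ≤ H₀ := by
    intro t ht i
    have ht0 : 0 < t := by rw [hT₀_def] at ht; linarith
    rw [hH₀_def]
    apply hspd i t (2 * M₀) ht0 (by positivity)
    intro j hj
    have h1 : -τbar ≤ t - τ t := by
      have := (hτ t).2; rw [hT₀_def] at ht; linarith
    have h2 : -τbar ≤ t := by linarith
    calc ‖x j (t - τ t) - x i t‖ ≤ ‖x j (t - τ t)‖ + ‖x i t‖ := norm_sub_le _ _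
      _ ≤ 2 * M₀ := by linarith [hinv j _ h1, hinv i t h2]
  -- ## step A : speed bound improvement
  have stepA : ∀ (a₀ G H : ℝ), T₀ ≤ a₀ → 0 ≤ G → 0 ≤ H →
      (∀ t, a₀ ≤ t → ∀ p q : Fin N, ‖x p t - x q t‖ ≤ G) →
      (∀ t, a₀ - τbar ≤ t → ∀ i, ‖x' i t‖ ≤ H) →
      (∀ t, a₀ + τbar ≤ t → ∀ i, ‖x' i t‖ ≤ β * G + θ * H) := by
    intro a₀ G H ha₀T hG0 hH0 hGb hHb t ht i
    have hT₀' : 2 * τbar + 1 ≤ a₀ := by rw [← hT₀_def]; exact ha₀T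
    have ht0 : 0 < t := by linarith
    have hτt2 : τ t ≤ τbar := (hτ t).2
    have hτt1 : 0 ≤ τ t := (hτ t).1
    have hKbd : ∀ j : Fin N, j ≠ i → ‖x j (t - τ t) - x i t‖ ≤ G + τbar * H := by
      intro j hj
      have hdel : ‖x j (t - τ t) - x j t‖ ≤ τbar * H := by
        apply hmvt j t H (by linarith) hH0
        intro u hu1 hu2
        exact hHb u (by linarith) j
      have hpair : ‖x j t - x i t‖ ≤ G := hGb t (by linarith) j i
      have hsplit : x j (t - τ t) - x i t = (x j (t - τ t) - x j t) + (x j t - x i t) := by abel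
      rw [hsplit]
      exact le_trans (norm_add_le _ _) (by linarith)
    have hfin := hspd i t (G + τbar * H) ht0 (by positivity) hKbd
    calc ‖x' i t‖ ≤ lam * (G + τbar * H) / ψ₀ := hfin
      _ = β * G + θ * H := by rw [hβ_def, hθ_def]; field_simp
  -- ## step B : diameter contraction
  have stepB : ∀ (a₀ G H' : ℝ), T₀ ≤ a₀ → 0 ≤ G → 0 ≤ H' →
      (∀ t, a₀ ≤ t → ∀ p q : Fin N, ‖x p t - x q t‖ ≤ G) →
      (∀ t, a₀ + τbar ≤ t → ∀ i, ‖x' i t‖ ≤ H') →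
      (∀ t, a₀ + L ≤ t → ∀ p q : Fin N, ‖x p t - x q t‖ ≤ ε * G + α * H') := by
    intro a₀ G H' ha₀T hG0 hH'0 hGb hH'b t ht p q
    have hT₀' : 2 * τbar + 1 ≤ a₀ := by rw [← hT₀_def]; exact ha₀T
    have hLday : 2 * τbar + s₀ ≤ L := hL_def.ge
    refine le_of_forall_pos_le_add ?_
    intro δ hδ
    have hc₀0 : 0 ≤ (1 / ψ₀) * (τbar * H') := by positivity
    have hcr := HK_crossing (ι := Fin N × Fin N)
      (fun pq u => ‖x pq.1 u - x pq.2 u‖)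
      (fun u => α * H' + δ + (G - α * H') * Real.exp (-A * (u - (a₀ + 2 * τbar))))
      (fun u => (G - α * H') * (Real.exp (-A * (u - (a₀ + 2 * τbar))) * -A))
      (a₀ + 2 * τbar)
      (by -- continuity
        intro pq u hu
        have hu0 : 0 < u := by
          have : a₀ + 2 * τbar ≤ u := hu
          linarith only [this, hT₀', hτbar0]
        exact (((hderiv pq.1 u hu0).continuousAt.sub
          (hderiv pq.2 u hu0).continuousAt).norm).continuousWithinAt)
      (by -- derivative of the barrier
        intro u
        have h1 : HasDerivAt (fun z : ℝ => -A * (z - (a₀ + 2 * τbar))) (-A) u := by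
          simpa using ((hasDerivAt_id u).sub_const (a₀ + 2 * τbar)).const_mul (-A)
        exact ((h1.exp.const_mul (G - α * H')).const_add (α * H' + δ)))
      (by -- initial strict inequality
        intro pq
        have h := hGb (a₀ + 2 * τbar) (by linarith only [hτbar0]) pq.1 pq.2
        have hαH : 0 ≤ α * H' := mul_nonneg hα0 hH'0
        simp only [sub_self, mul_zero, Real.exp_zero, mul_one]
        linarith only [h, hδ])
      ?_
    · -- conclusion
      have hconc := hcr t (by linarith only [ht, hs₀, hLday]) (p, q)
      have harg : -A * (t - (a₀ + 2 * τbar)) ≤ -A * s₀ := by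
        have h1 : s₀ ≤ t - (a₀ + 2 * τbar) := by linarith only [ht, hLday]
        nlinarith only [h1, hA]
      have hE1 : Real.exp (-A * (t - (a₀ + 2 * τbar))) ≤ ε := by
        rw [← hexp]; exact Real.exp_le_exp.2 harg
      have hE0 : (0:ℝ) < Real.exp (-A * (t - (a₀ + 2 * τbar))) := Real.exp_pos _
      have hαH : 0 ≤ α * H' := mul_nonneg hα0 hH'0
      have hcase : (G - α * H') * Real.exp (-A * (t - (a₀ + 2 * τbar))) ≤ G * ε := by
        rcases le_or_gt 0 (G - α * H') with h | h
        · calc (G - α * H') * Real.exp (-A * (t - (a₀ + 2 * τbar)))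
              ≤ G * Real.exp (-A * (t - (a₀ + 2 * τbar))) := by
                apply mul_le_mul_of_nonneg_right _ hE0.le
                linarith only [hαH]
            _ ≤ G * ε := mul_le_mul_of_nonneg_left hE1 hG0
        · have h1 : (G - α * H') * Real.exp (-A * (t - (a₀ + 2 * τbar))) ≤ 0 :=
            mul_nonpos_of_nonpos_of_nonneg h.le hE0.le
          have h2 : 0 ≤ G * ε := mul_nonneg hG0 hε.le
          linarith only [h1, h2]
      have hge : G * ε = ε * G := mul_comm _ _
      calc ‖x p t - x q t‖
          ≤ α * H' + δ + (G - α * H') * Real.exp (-A * (t - (a₀ + 2 * τbar))) := hconc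
        _ ≤ ε * G + α * H' + δ := by linarith only [hcase, hge]
    · -- the key touching-point estimate
      intro u hu hist pq htc
      obtain ⟨p1, q1⟩ := pq
      have hu0 : 0 < u := by linarith only [hu, hT₀', hτbar0]
      have hRw : ‖x p1 u - x q1 u‖
          = α * H' + δ + (G - α * H') * Real.exp (-A * (u - (a₀ + 2 * τbar))) := htc
      have hαH : 0 ≤ α * H' := mul_nonneg hα0 hH'0
      have hargu : -A * (u - (a₀ + 2 * τbar)) ≤ 0 :=
        mul_nonpos_of_nonpos_of_nonneg (by linarith only [hA]) (by linarith only [hu])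
      have hEu1 : Real.exp (-A * (u - (a₀ + 2 * τbar))) ≤ 1 := Real.exp_le_one_iff.2 hargu
      have hEu0 : (0:ℝ) < Real.exp (-A * (u - (a₀ + 2 * τbar))) := Real.exp_pos _
      have hRpos : 0 < ‖x p1 u - x q1 u‖ := by
        rw [hRw]
        rcases le_or_gt 0 (G - α * H') with h | h
        · have := mul_nonneg h hEu0.le
          linarith only [this, hδ, hαH]
        · have h1 : (G - α * H') * 1 ≤ (G - α * H') * Real.exp (-A * (u - (a₀ + 2 * τbar))) :=
            mul_le_mul_of_nonpos_left hEu1 h.le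
          linarith only [h1, hδ, hG0, hαH]
      -- derivative of the pair distance
      have hdsub : HasDerivAt (fun z => x p1 z - x q1 z) (x' p1 u - x' q1 u) u :=
        (hderiv p1 u hu0).sub (hderiv q1 u hu0)
      have hinner : HasDerivAt
          (fun z => (inner ℝ (x p1 z - x q1 z) (x p1 z - x q1 z) : ℝ))
          ((inner ℝ (x p1 u - x q1 u) (x' p1 u - x' q1 u) : ℝ)
            + (inner ℝ (x' p1 u - x' q1 u) (x p1 u - x q1 u) : ℝ)) u :=
        hdsub.inner ℝ hdsub
      have hinne : (inner ℝ (x p1 u - x q1 u) (x p1 u - x q1 u) : ℝ) ≠ 0 := by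
        rw [real_inner_self_eq_norm_mul_norm]
        exact ne_of_gt (mul_pos hRpos hRpos)
      have hsqrt := (Real.hasDerivAt_sqrt hinne).comp u hinner
      have hfeq : (Real.sqrt ∘ fun z => (inner ℝ (x p1 z - x q1 z) (x p1 z - x q1 z) : ℝ))
          = fun z => ‖x p1 z - x q1 z‖ := by
        funext z
        simp only [Function.comp_apply]
        rw [real_inner_self_eq_norm_mul_norm, Real.sqrt_mul_self (norm_nonneg _)]
      rw [hfeq] at hsqrt
      refine ⟨_, hsqrt, ?_⟩
      -- notation
      have hτu1 : 0 ≤ τ u := (hτ u).1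
      have hτu2 : τ u ≤ τbar := (hτ u).2
      have huτ : 0 < u - τ u := by linarith only [hτu2, hu, hT₀', hτbar0]
      -- delay error bound
      have herr : ∀ k : Fin N, ‖x k (u - τ u) - x k u‖ ≤ τbar * H' := by
        intro k
        apply hmvt k u H' huτ hH'0
        intro z hz1 hz2
        apply hH'b z _ k
        linarith only [hz1, hτu2, hu]
      -- all pairwise distances at time u are at most the barrier value
      have hallp : ∀ k l : Fin N, ‖x k u - x l u‖ ≤ ‖x p1 u - x q1 u‖ := by
        intro k l
        have h1 := hist (k, l) u (le_of_lt hu) (le_refl u)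
        rw [hRw]
        exact h1
      -- the core inner product estimate
      have hkey2 : (inner ℝ (x' p1 u - x' q1 u) (x p1 u - x q1 u) : ℝ)
          ≤ -A * (‖x p1 u - x q1 u‖ * ‖x p1 u - x q1 u‖)
            + A * (α * H') * ‖x p1 u - x q1 u‖ := by
        have hNne : (N:ℝ) ≠ 0 := ne_of_gt hNR
        have hRn0 : 0 ≤ ‖x p1 u - x q1 u‖ := norm_nonneg _
        have hexp_p : (inner ℝ (x' p1 u) (x p1 u - x q1 u) : ℝ)
            = (lam / N) * ∑ k ∈ Finset.univ.erase p1,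
                a p1 k u * (inner ℝ (x k (u - τ u) - x p1 u) (x p1 u - x q1 u) : ℝ) := by
          rw [hODE p1 u hu0, real_inner_smul_left, sum_inner]
          congr 1
          exact Finset.sum_congr rfl fun k _ => real_inner_smul_left _ _ _
        have hexp_q : (inner ℝ (x' q1 u) (x p1 u - x q1 u) : ℝ)
            = (lam / N) * ∑ k ∈ Finset.univ.erase q1,
                a q1 k u * (inner ℝ (x k (u - τ u) - x q1 u) (x p1 u - x q1 u) : ℝ) := by
          rw [hODE q1 u hu0, real_inner_smul_left, sum_inner]
          congr 1
          exact Finset.sum_congr rfl fun k _ => real_inner_smul_left _ _ _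
        have hr : ∀ k : Fin N, (inner ℝ (x k u - x p1 u) (x p1 u - x q1 u) : ℝ) ≤ 0 := by
          intro k
          have hsplit : x k u - x p1 u = (x k u - x q1 u) - (x p1 u - x q1 u) := by abel
          rw [hsplit, inner_sub_left, real_inner_self_eq_norm_mul_norm]
          have h1 : (inner ℝ (x k u - x q1 u) (x p1 u - x q1 u) : ℝ)
              ≤ ‖x k u - x q1 u‖ * ‖x p1 u - x q1 u‖ := real_inner_le_norm _ _
          have h2 : ‖x k u - x q1 u‖ * ‖x p1 u - x q1 u‖
              ≤ ‖x p1 u - x q1 u‖ * ‖x p1 u - x q1 u‖ :=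
            mul_le_mul_of_nonneg_right (hallp k q1) hRn0
          linarith only [h1, h2]
        have hs : ∀ k : Fin N, 0 ≤ (inner ℝ (x k u - x q1 u) (x p1 u - x q1 u) : ℝ) := by
          intro k
          have hsplit : x k u - x q1 u = (x k u - x p1 u) + (x p1 u - x q1 u) := by abel
          rw [hsplit, inner_add_left, real_inner_self_eq_norm_mul_norm]
          have h1 : -(‖x k u - x p1 u‖ * ‖x p1 u - x q1 u‖)
              ≤ (inner ℝ (x k u - x p1 u) (x p1 u - x q1 u) : ℝ) := by
            have h4 := abs_real_inner_le_norm (x k u - x p1 u) (x p1 u - x q1 u)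
            have h5 := neg_abs_le (inner ℝ (x k u - x p1 u) (x p1 u - x q1 u) : ℝ)
            linarith only [h4, h5]
          have h3 : ‖x k u - x p1 u‖ * ‖x p1 u - x q1 u‖
              ≤ ‖x p1 u - x q1 u‖ * ‖x p1 u - x q1 u‖ :=
            mul_le_mul_of_nonneg_right (hallp k p1) hRn0
          linarith only [h1, h3]
        have hbp : ∀ k ∈ Finset.univ.erase p1,
            a p1 k u * (inner ℝ (x k (u - τ u) - x p1 u) (x p1 u - x q1 u) : ℝ)
            ≤ ψ₀ * (inner ℝ (x k u - x p1 u) (x p1 u - x q1 u) : ℝ)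
              + (1 / ψ₀) * (τbar * H' * ‖x p1 u - x q1 u‖) := by
          intro k _
          have hsplit : x k (u - τ u) - x p1 u
              = (x k u - x p1 u) + (x k (u - τ u) - x k u) := by abel
          rw [hsplit, inner_add_left, mul_add]
          have hak := ha p1 k u hu0.le
          have hak0 : 0 ≤ a p1 k u := le_trans hψ₀.le hak.1
          have hp1b : a p1 k u * (inner ℝ (x k u - x p1 u) (x p1 u - x q1 u) : ℝ)
              ≤ ψ₀ * (inner ℝ (x k u - x p1 u) (x p1 u - x q1 u) : ℝ) :=
            mul_le_mul_of_nonpos_right hak.1 (hr k)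
          have habs : |(inner ℝ (x k (u - τ u) - x k u) (x p1 u - x q1 u) : ℝ)|
              ≤ τbar * H' * ‖x p1 u - x q1 u‖ := by
            have h1 := abs_real_inner_le_norm (x k (u - τ u) - x k u) (x p1 u - x q1 u)
            have h2 : ‖x k (u - τ u) - x k u‖ * ‖x p1 u - x q1 u‖
                ≤ τbar * H' * ‖x p1 u - x q1 u‖ :=
              mul_le_mul_of_nonneg_right (herr k) hRn0
            linarith only [h1, h2]
          have hp2b : a p1 k u * (inner ℝ (x k (u - τ u) - x k u) (x p1 u - x q1 u) : ℝ)
              ≤ (1 / ψ₀) * (τbar * H' * ‖x p1 u - x q1 u‖) := by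
            calc a p1 k u * (inner ℝ (x k (u - τ u) - x k u) (x p1 u - x q1 u) : ℝ)
                ≤ a p1 k u * |(inner ℝ (x k (u - τ u) - x k u) (x p1 u - x q1 u) : ℝ)| :=
                  mul_le_mul_of_nonneg_left (le_abs_self _) hak0
              _ ≤ (1 / ψ₀) * |(inner ℝ (x k (u - τ u) - x k u) (x p1 u - x q1 u) : ℝ)| :=
                  mul_le_mul_of_nonneg_right hak.2 (abs_nonneg _)
              _ ≤ (1 / ψ₀) * (τbar * H' * ‖x p1 u - x q1 u‖) :=
                  mul_le_mul_of_nonneg_left habs (by positivity)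
          exact add_le_add hp1b hp2b
        have hbq : ∀ k ∈ Finset.univ.erase q1,
            -(a q1 k u * (inner ℝ (x k (u - τ u) - x q1 u) (x p1 u - x q1 u) : ℝ))
            ≤ -(ψ₀ * (inner ℝ (x k u - x q1 u) (x p1 u - x q1 u) : ℝ))
              + (1 / ψ₀) * (τbar * H' * ‖x p1 u - x q1 u‖) := by
          intro k _
          have hsplit : x k (u - τ u) - x q1 u
              = (x k u - x q1 u) + (x k (u - τ u) - x k u) := by abel
          rw [hsplit, inner_add_left, mul_add, neg_add]
          have hak := ha q1 k u hu0.le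
          have hak0 : 0 ≤ a q1 k u := le_trans hψ₀.le hak.1
          have hq1b : ψ₀ * (inner ℝ (x k u - x q1 u) (x p1 u - x q1 u) : ℝ)
              ≤ a q1 k u * (inner ℝ (x k u - x q1 u) (x p1 u - x q1 u) : ℝ) :=
            mul_le_mul_of_nonneg_right hak.1 (hs k)
          have habs : |(inner ℝ (x k (u - τ u) - x k u) (x p1 u - x q1 u) : ℝ)|
              ≤ τbar * H' * ‖x p1 u - x q1 u‖ := by
            have h1 := abs_real_inner_le_norm (x k (u - τ u) - x k u) (x p1 u - x q1 u)
            have h2 : ‖x k (u - τ u) - x k u‖ * ‖x p1 u - x q1 u‖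
                ≤ τbar * H' * ‖x p1 u - x q1 u‖ :=
              mul_le_mul_of_nonneg_right (herr k) hRn0
            linarith only [h1, h2]
          have hq2b : -(a q1 k u * (inner ℝ (x k (u - τ u) - x k u) (x p1 u - x q1 u) : ℝ))
              ≤ (1 / ψ₀) * (τbar * H' * ‖x p1 u - x q1 u‖) := by
            calc -(a q1 k u * (inner ℝ (x k (u - τ u) - x k u) (x p1 u - x q1 u) : ℝ))
                = a q1 k u * -(inner ℝ (x k (u - τ u) - x k u) (x p1 u - x q1 u) : ℝ) := by ring
              _ ≤ a q1 k u * |(inner ℝ (x k (u - τ u) - x k u) (x p1 u - x q1 u) : ℝ)| := by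
                  apply mul_le_mul_of_nonneg_left _ hak0
                  exact neg_le_abs _
              _ ≤ (1 / ψ₀) * |(inner ℝ (x k (u - τ u) - x k u) (x p1 u - x q1 u) : ℝ)| :=
                  mul_le_mul_of_nonneg_right hak.2 (abs_nonneg _)
              _ ≤ (1 / ψ₀) * (τbar * H' * ‖x p1 u - x q1 u‖) :=
                  mul_le_mul_of_nonneg_left habs (by positivity)
          exact add_le_add (neg_le_neg hq1b) hq2b
        -- summation
        have hcard_p : ((Finset.univ.erase p1).card : ℝ) ≤ (N : ℝ) := by
          have h1 := Finset.card_erase_le (s := (Finset.univ : Finset (Fin N))) (a := p1)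
          have h2 : (Finset.univ : Finset (Fin N)).card = N := by simp
          exact_mod_cast le_trans h1 (le_of_eq h2)
        have hcard_q : ((Finset.univ.erase q1).card : ℝ) ≤ (N : ℝ) := by
          have h1 := Finset.card_erase_le (s := (Finset.univ : Finset (Fin N))) (a := q1)
          have h2 : (Finset.univ : Finset (Fin N)).card = N := by simp
          exact_mod_cast le_trans h1 (le_of_eq h2)
        have hsum_p : ∑ k ∈ Finset.univ.erase p1,
              a p1 k u * (inner ℝ (x k (u - τ u) - x p1 u) (x p1 u - x q1 u) : ℝ)
            ≤ (∑ k ∈ Finset.univ.erase p1,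
                ψ₀ * (inner ℝ (x k u - x p1 u) (x p1 u - x q1 u) : ℝ))
              + (N : ℝ) * ((1 / ψ₀) * (τbar * H' * ‖x p1 u - x q1 u‖)) := by
          calc ∑ k ∈ Finset.univ.erase p1,
                a p1 k u * (inner ℝ (x k (u - τ u) - x p1 u) (x p1 u - x q1 u) : ℝ)
              ≤ ∑ k ∈ Finset.univ.erase p1,
                  (ψ₀ * (inner ℝ (x k u - x p1 u) (x p1 u - x q1 u) : ℝ)
                    + (1 / ψ₀) * (τbar * H' * ‖x p1 u - x q1 u‖)) :=
                Finset.sum_le_sum hbp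
            _ = (∑ k ∈ Finset.univ.erase p1,
                  ψ₀ * (inner ℝ (x k u - x p1 u) (x p1 u - x q1 u) : ℝ))
                + ((Finset.univ.erase p1).card : ℝ)
                  * ((1 / ψ₀) * (τbar * H' * ‖x p1 u - x q1 u‖)) := by
                rw [Finset.sum_add_distrib, Finset.sum_const, nsmul_eq_mul]
            _ ≤ _ := by
                have := mul_le_mul_of_nonneg_right hcard_p
                  (show 0 ≤ (1 / ψ₀) * (τbar * H' * ‖x p1 u - x q1 u‖) by positivity)
                linarith only [this]
        have hsum_q : -∑ k ∈ Finset.univ.erase q1,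
              a q1 k u * (inner ℝ (x k (u - τ u) - x q1 u) (x p1 u - x q1 u) : ℝ)
            ≤ -(∑ k ∈ Finset.univ.erase q1,
                ψ₀ * (inner ℝ (x k u - x q1 u) (x p1 u - x q1 u) : ℝ))
              + (N : ℝ) * ((1 / ψ₀) * (τbar * H' * ‖x p1 u - x q1 u‖)) := by
          rw [← Finset.sum_neg_distrib]
          calc ∑ k ∈ Finset.univ.erase q1,
                -(a q1 k u * (inner ℝ (x k (u - τ u) - x q1 u) (x p1 u - x q1 u) : ℝ))
              ≤ ∑ k ∈ Finset.univ.erase q1,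
                  (-(ψ₀ * (inner ℝ (x k u - x q1 u) (x p1 u - x q1 u) : ℝ))
                    + (1 / ψ₀) * (τbar * H' * ‖x p1 u - x q1 u‖)) :=
                Finset.sum_le_sum hbq
            _ = (∑ k ∈ Finset.univ.erase q1,
                  -(ψ₀ * (inner ℝ (x k u - x q1 u) (x p1 u - x q1 u) : ℝ)))
                + ((Finset.univ.erase q1).card : ℝ)
                  * ((1 / ψ₀) * (τbar * H' * ‖x p1 u - x q1 u‖)) := by
                rw [Finset.sum_add_distrib, Finset.sum_const, nsmul_eq_mul]
            _ = -(∑ k ∈ Finset.univ.erase q1,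
                  ψ₀ * (inner ℝ (x k u - x q1 u) (x p1 u - x q1 u) : ℝ))
                + ((Finset.univ.erase q1).card : ℝ)
                  * ((1 / ψ₀) * (τbar * H' * ‖x p1 u - x q1 u‖)) := by
                rw [Finset.sum_neg_distrib]
            _ ≤ _ := by
                have := mul_le_mul_of_nonneg_right hcard_q
                  (show 0 ≤ (1 / ψ₀) * (τbar * H' * ‖x p1 u - x q1 u‖) by positivity)
                linarith only [this]
        have herase_p : ∑ k ∈ Finset.univ.erase p1,
              ψ₀ * (inner ℝ (x k u - x p1 u) (x p1 u - x q1 u) : ℝ)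
            = ∑ k ∈ Finset.univ,
              ψ₀ * (inner ℝ (x k u - x p1 u) (x p1 u - x q1 u) : ℝ) :=
          Finset.sum_erase _ (by rw [sub_self, inner_zero_left, mul_zero])
        have herase_q : ∑ k ∈ Finset.univ.erase q1,
              ψ₀ * (inner ℝ (x k u - x q1 u) (x p1 u - x q1 u) : ℝ)
            = ∑ k ∈ Finset.univ,
              ψ₀ * (inner ℝ (x k u - x q1 u) (x p1 u - x q1 u) : ℝ) :=
          Finset.sum_erase _ (by rw [sub_self, inner_zero_left, mul_zero])
        have htele : (∑ k ∈ Finset.univ,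
              ψ₀ * (inner ℝ (x k u - x p1 u) (x p1 u - x q1 u) : ℝ))
            - (∑ k ∈ Finset.univ,
              ψ₀ * (inner ℝ (x k u - x q1 u) (x p1 u - x q1 u) : ℝ))
            = -((N : ℝ) * (ψ₀ * (‖x p1 u - x q1 u‖ * ‖x p1 u - x q1 u‖))) := by
          rw [← Finset.sum_sub_distrib]
          have hterm : ∀ k ∈ (Finset.univ : Finset (Fin N)),
              ψ₀ * (inner ℝ (x k u - x p1 u) (x p1 u - x q1 u) : ℝ)
                - ψ₀ * (inner ℝ (x k u - x q1 u) (x p1 u - x q1 u) : ℝ)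
              = -(ψ₀ * (‖x p1 u - x q1 u‖ * ‖x p1 u - x q1 u‖)) := by
            intro k _
            have h1 : (inner ℝ (x k u - x p1 u) (x p1 u - x q1 u) : ℝ)
                - (inner ℝ (x k u - x q1 u) (x p1 u - x q1 u) : ℝ)
                = -(‖x p1 u - x q1 u‖ * ‖x p1 u - x q1 u‖) := by
              rw [← inner_sub_left]
              have h2 : (x k u - x p1 u) - (x k u - x q1 u) = -(x p1 u - x q1 u) := by abel
              rw [h2, inner_neg_left, real_inner_self_eq_norm_mul_norm]
            calc ψ₀ * (inner ℝ (x k u - x p1 u) (x p1 u - x q1 u) : ℝ)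
                  - ψ₀ * (inner ℝ (x k u - x q1 u) (x p1 u - x q1 u) : ℝ)
                = ψ₀ * ((inner ℝ (x k u - x p1 u) (x p1 u - x q1 u) : ℝ)
                    - (inner ℝ (x k u - x q1 u) (x p1 u - x q1 u) : ℝ)) := by ring
              _ = ψ₀ * -(‖x p1 u - x q1 u‖ * ‖x p1 u - x q1 u‖) := by rw [h1]
              _ = -(ψ₀ * (‖x p1 u - x q1 u‖ * ‖x p1 u - x q1 u‖)) := by ring
          rw [Finset.sum_congr rfl hterm, Finset.sum_const, Finset.card_univ,
            Fintype.card_fin, nsmul_eq_mul]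
          ring
        -- put everything together
        rw [inner_sub_left, hexp_p, hexp_q]
        have hlamN : 0 ≤ lam / (N : ℝ) := by positivity
        have hdiff : (∑ k ∈ Finset.univ.erase p1,
              a p1 k u * (inner ℝ (x k (u - τ u) - x p1 u) (x p1 u - x q1 u) : ℝ))
            - (∑ k ∈ Finset.univ.erase q1,
              a q1 k u * (inner ℝ (x k (u - τ u) - x q1 u) (x p1 u - x q1 u) : ℝ))
            ≤ -((N : ℝ) * (ψ₀ * (‖x p1 u - x q1 u‖ * ‖x p1 u - x q1 u‖)))
              + 2 * ((N : ℝ) * ((1 / ψ₀) * (τbar * H' * ‖x p1 u - x q1 u‖))) := by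
          rw [herase_p] at hsum_p
          rw [herase_q] at hsum_q
          linarith only [hsum_p, hsum_q, htele]
        have hmul := mul_le_mul_of_nonneg_left hdiff hlamN
        have hration : (lam / (N : ℝ))
              * (-((N : ℝ) * (ψ₀ * (‖x p1 u - x q1 u‖ * ‖x p1 u - x q1 u‖)))
                + 2 * ((N : ℝ) * ((1 / ψ₀) * (τbar * H' * ‖x p1 u - x q1 u‖))))
            = -A * (‖x p1 u - x q1 u‖ * ‖x p1 u - x q1 u‖)
              + A * (α * H') * ‖x p1 u - x q1 u‖ := by
          rw [hA_def, hα_def]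
          field_simp
        calc (lam / (N : ℝ)) * (∑ k ∈ Finset.univ.erase p1,
                a p1 k u * (inner ℝ (x k (u - τ u) - x p1 u) (x p1 u - x q1 u) : ℝ))
              - (lam / (N : ℝ)) * (∑ k ∈ Finset.univ.erase q1,
                a q1 k u * (inner ℝ (x k (u - τ u) - x q1 u) (x p1 u - x q1 u) : ℝ))
            = (lam / (N : ℝ)) * ((∑ k ∈ Finset.univ.erase p1,
                a p1 k u * (inner ℝ (x k (u - τ u) - x p1 u) (x p1 u - x q1 u) : ℝ))
              - (∑ k ∈ Finset.univ.erase q1,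
                a q1 k u * (inner ℝ (x k (u - τ u) - x q1 u) (x p1 u - x q1 u) : ℝ))) := by ring
          _ ≤ (lam / (N : ℝ))
              * (-((N : ℝ) * (ψ₀ * (‖x p1 u - x q1 u‖ * ‖x p1 u - x q1 u‖)))
                + 2 * ((N : ℝ) * ((1 / ψ₀) * (τbar * H' * ‖x p1 u - x q1 u‖)))) := hmul
          _ = -A * (‖x p1 u - x q1 u‖ * ‖x p1 u - x q1 u‖)
              + A * (α * H') * ‖x p1 u - x q1 u‖ := hration
      -- conclude
      beta_reduce
      have hsg : Real.sqrt (inner ℝ (x p1 u - x q1 u) (x p1 u - x q1 u) : ℝ)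
          = ‖x p1 u - x q1 u‖ := by
        rw [real_inner_self_eq_norm_mul_norm, Real.sqrt_mul_self (norm_nonneg _)]
      rw [hsg]
      have hcomm : (inner ℝ (x p1 u - x q1 u) (x' p1 u - x' q1 u) : ℝ)
          = (inner ℝ (x' p1 u - x' q1 u) (x p1 u - x q1 u) : ℝ) := real_inner_comm _ _
      rw [hcomm]
      have hBp : (G - α * H') * Real.exp (-A * (u - (a₀ + 2 * τbar)))
          = ‖x p1 u - x q1 u‖ - α * H' - δ := by linarith only [hRw]
      have hB' : (G - α * H') * (Real.exp (-A * (u - (a₀ + 2 * τbar))) * -A)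
          = -(A * ‖x p1 u - x q1 u‖) + A * (α * H') + A * δ := by
        have e1 : (G - α * H') * (Real.exp (-A * (u - (a₀ + 2 * τbar))) * -A)
            = ((G - α * H') * Real.exp (-A * (u - (a₀ + 2 * τbar)))) * -A := by ring
        rw [e1, hBp]; ring
      rw [hB']
      have hdiv : 1 / (2 * ‖x p1 u - x q1 u‖) *
          ((inner ℝ (x' p1 u - x' q1 u) (x p1 u - x q1 u) : ℝ)
            + (inner ℝ (x' p1 u - x' q1 u) (x p1 u - x q1 u) : ℝ))
          = (inner ℝ (x' p1 u - x' q1 u) (x p1 u - x q1 u) : ℝ) / ‖x p1 u - x q1 u‖ := by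
        field_simp
        ring
      rw [hdiv, div_lt_iff₀ hRpos]
      have hfin : 0 < A * δ * ‖x p1 u - x q1 u‖ := by positivity
      nlinarith only [hkey2, hfin]

  -- ## main induction
  obtain ⟨Z₀, hZ₀_def⟩ : ∃ z : ℝ, z = 2 * M₀ + μ * H₀ := ⟨_, rfl⟩
  have hZ₀0 : 0 ≤ Z₀ := by rw [hZ₀_def]; positivity
  have main : ∀ n : ℕ, ∃ G H : ℝ, 0 ≤ G ∧ 0 ≤ H ∧ G + μ * H ≤ Z₀ * κ ^ n ∧
      (∀ t, T₀ + n * L ≤ t → ∀ p q : Fin N, ‖x p t - x q t‖ ≤ G) ∧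
      (∀ t, T₀ + n * L - τbar ≤ t → ∀ i, ‖x' i t‖ ≤ H) := by
    intro n
    induction n with
    | zero =>
      refine ⟨2 * M₀, H₀, by positivity, hH₀0, by rw [hZ₀_def]; simp, ?_, ?_⟩
      · intro t ht p q
        apply hdiam t (by push_cast at ht ⊢; linarith) p q
      · intro t ht i
        apply hH₀ t (by push_cast at ht ⊢; linarith) i
    | succ n ih =>
      obtain ⟨G, H, hG0, hH0, hGH, hGb, hHb⟩ := ih
      have ha₀ : T₀ ≤ T₀ + n * L := by
        have : (0:ℝ) ≤ n * L := by positivity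
        linarith
      have hH' := stepA (T₀ + n * L) G H ha₀ hG0 hH0 hGb hHb
      have hH'0 : 0 ≤ β * G + θ * H := by positivity
      have hG' := stepB (T₀ + n * L) G (β * G + θ * H) ha₀ hG0 hH'0 hGb hH'
      refine ⟨ε * G + α * (β * G + θ * H), β * G + θ * H, by positivity, hH'0, ?_, ?_, ?_⟩
      · -- arithmetic contraction
        have e1 : ε * G + α * (β * G + θ * H) + μ * (β * G + θ * H)
            = (ε + ν * β) * G + (θ * ν) * H := by rw [hμ_def]; ring
        have e2 : (θ * ν) * H = κ₂ * (μ * H) := by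
          rw [hκ₂_def]
          field_simp
        have h3 : (ε + ν * β) * G ≤ κ * G := by
          apply mul_le_mul_of_nonneg_right _ hG0
          rw [hκ_def, ← hκ₁_def]
          exact le_max_left _ _
        have h4 : κ₂ * (μ * H) ≤ κ * (μ * H) := by
          apply mul_le_mul_of_nonneg_right _ (by positivity)
          rw [hκ_def]
          exact le_max_right _ _
        calc ε * G + α * (β * G + θ * H) + μ * (β * G + θ * H)
            = (ε + ν * β) * G + κ₂ * (μ * H) := by rw [e1, e2]
          _ ≤ κ * G + κ * (μ * H) := add_le_add h3 h4
          _ = κ * (G + μ * H) := by ring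
          _ ≤ κ * (Z₀ * κ ^ n) := by
              apply mul_le_mul_of_nonneg_left hGH (le_of_lt hκpos)
          _ = Z₀ * κ ^ (n + 1) := by ring
      · intro t ht p q
        apply hG' t _ p q
        push_cast at ht
        linarith [show ((n:ℝ) + 1) * L = (n:ℝ) * L + L from by ring]
      · intro t ht i
        apply hH' t _ i
        push_cast at ht
        linarith [show ((n:ℝ) + 1) * L = (n:ℝ) * L + L from by ring, hs₀, hL_def.le, hL_def.ge]
  -- ## final assembly
  obtain ⟨γ, hγ_def⟩ : ∃ z : ℝ, z = -Real.log κ / L := ⟨_, rfl⟩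
  have hlogκ : Real.log κ < 0 := Real.log_neg hκpos hκ1
  have hγ : 0 < γ := by
    rw [hγ_def]; exact div_pos (by linarith only [hlogκ]) hL
  obtain ⟨C, hC_def⟩ : ∃ z : ℝ,
      z = (Z₀ / κ) * Real.exp (γ * T₀) + 2 * M₀ * Real.exp (γ * T₀) + 1 := ⟨_, rfl⟩
  have hCa : 0 ≤ (Z₀ / κ) * Real.exp (γ * T₀) :=
    mul_nonneg (div_nonneg hZ₀0 hκpos.le) (Real.exp_pos _).le
  have hCb : 0 ≤ 2 * M₀ * Real.exp (γ * T₀) :=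
    mul_nonneg (by linarith only [hM₀0]) (Real.exp_pos _).le
  have hC : 0 < C := by
    rw [hC_def]; linarith only [hCa, hCb]
  refine ⟨γ, C, hγ, hC, ?_⟩
  intro t ht0
  obtain ⟨i, j, hij⟩ := (hdX t).2
  have hEt0 : (0:ℝ) < Real.exp (-γ * t) := Real.exp_pos _
  rcases le_or_gt T₀ t with hcase | hcase
  · -- large time
    obtain ⟨n, hn_def⟩ : ∃ n : ℕ, n = ⌊(t - T₀) / L⌋₊ := ⟨_, rfl⟩
    have hdiv0 : 0 ≤ (t - T₀) / L := div_nonneg (by linarith only [hcase]) hL.le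
    have hnle : (n : ℝ) ≤ (t - T₀) / L := by
      rw [hn_def]; exact_mod_cast Nat.floor_le hdiv0
    have hnge : (t - T₀) / L < (n : ℝ) + 1 := by
      rw [hn_def]; exact Nat.lt_floor_add_one _
    have htn : T₀ + (n : ℝ) * L ≤ t := by
      have h3 : (n : ℝ) * L ≤ (t - T₀) / L * L := mul_le_mul_of_nonneg_right hnle hL.le
      have h4 : (t - T₀) / L * L = t - T₀ := div_mul_cancel₀ _ hL.ne'
      linarith only [h3, h4]
    obtain ⟨G, H, hG0, hH0, hGH, hGb, hHb⟩ := main n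
    have h1 : dX t ≤ G := by rw [hij]; exact hGb t htn i j
    have h2 : G ≤ Z₀ * κ ^ n := by
      have h3 : 0 ≤ μ * H := mul_nonneg hμ.le hH0
      linarith only [hGH, h3]
    have hκn : κ ^ n = Real.exp ((n : ℝ) * Real.log κ) := by
      rw [Real.exp_nat_mul, Real.exp_log hκpos]
    have h4 : (n : ℝ) * Real.log κ ≤ -γ * (t - T₀) - Real.log κ := by
      have h5 : (t - T₀) / L - 1 ≤ (n : ℝ) := by linarith only [hnge]
      have h6 : (n : ℝ) * Real.log κ ≤ ((t - T₀) / L - 1) * Real.log κ :=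
        mul_le_mul_of_nonpos_right h5 hlogκ.le
      have h7 : -γ * (t - T₀) = (t - T₀) / L * Real.log κ := by
        rw [hγ_def]; field_simp
      have h8 : ((t - T₀) / L - 1) * Real.log κ
          = (t - T₀) / L * Real.log κ - Real.log κ := by ring
      linarith only [h6, h7, h8]
    have h9 : Real.exp ((n : ℝ) * Real.log κ)
        ≤ Real.exp (-γ * (t - T₀) - Real.log κ) := Real.exp_le_exp.2 h4
    have h10 : Real.exp (-γ * (t - T₀) - Real.log κ)
        = Real.exp (-γ * t) * Real.exp (γ * T₀) / κ := by
      have he : -γ * (t - T₀) - Real.log κ = -γ * t + γ * T₀ - Real.log κ := by ring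
      rw [he, Real.exp_sub, Real.exp_add, Real.exp_log hκpos]
    calc dX t ≤ Z₀ * κ ^ n := le_trans h1 h2
      _ = Z₀ * Real.exp ((n : ℝ) * Real.log κ) := by rw [hκn]
      _ ≤ Z₀ * (Real.exp (-γ * t) * Real.exp (γ * T₀) / κ) := by
          apply mul_le_mul_of_nonneg_left _ hZ₀0
          rw [← h10]; exact h9
      _ = (Z₀ / κ) * Real.exp (γ * T₀) * Real.exp (-γ * t) := by ring
      _ ≤ C * Real.exp (-γ * t) := by
          apply mul_le_mul_of_nonneg_right _ hEt0.le
          rw [hC_def]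
          linarith only [hCb]
  · -- initial stretch
    have h1 : dX t ≤ 2 * M₀ := by
      rw [hij]; exact hdiam t (by linarith only [ht0, hτbar0]) i j
    have h2 : (1:ℝ) ≤ Real.exp (γ * T₀) * Real.exp (-γ * t) := by
      rw [← Real.exp_add]
      have h3 : (0:ℝ) ≤ γ * T₀ + -γ * t := by
        have := mul_nonneg hγ.le (show (0:ℝ) ≤ T₀ - t by linarith only [hcase])
        nlinarith only [this]
      have h4 := Real.exp_le_exp.2 h3
      rw [Real.exp_zero] at h4
      exact h4
    calc dX t ≤ 2 * M₀ := h1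
      _ ≤ 2 * M₀ * (Real.exp (γ * T₀) * Real.exp (-γ * t)) :=
          le_mul_of_one_le_right (by linarith only [hM₀0]) h2
      _ = (2 * M₀ * Real.exp (γ * T₀)) * Real.exp (-γ * t) := by ring
      _ ≤ C * Real.exp (-γ * t) := by
          apply mul_le_mul_of_nonneg_right _ hEt0.le
          rw [hC_def]
          linarith only [hCa]
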